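/- Let N be a natural number, K a real number, and let ω, a₀,…,a_N, b₀,…,b_N, p₀,…,p_N, q₀,…,q_N : ℝ → ℝ with each aₙ and bₙ differentiable, satisfying for each n = 0,…,N the mode equations aₙ'(t) = nω(t)bₙ(t) − Kaₙ(t) + pₙ(t) and bₙ'(t) = −nω(t)aₙ(t) − Kbₙ(t) + qₙ(t). Define m(θ,t) = Σ_{n=0}^N ( aₙ(t) sin(nθ) + bₙ(t) cos(nθ) ) and q(θ,t) = Σ_{n=0}^N ( pₙ(t) sin(nθ) + qₙ(t) cos(nθ) ). Then m satisfies the mass-conservation equation ∂m/∂t (θ,t) = q(θ,t) − K m(θ,t) − ω(t) ∂m/∂θ (θ,t) for all θ and t. -/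

import Mathlib

open Real Finset

/-- If the Fourier coefficients satisfy the mode equations, then the finite
trigonometric sums `m(θ,t)` and `q(θ,t)` satisfy the mass-conservation equation
`∂m/∂t = q − Km − ω ∂m/∂θ`. -/
theorem water_wheel_mass_conservation
    (N : ℕ) (K : ℝ) (ω : ℝ → ℝ)
    (a b p q : ℕ → ℝ → ℝ)
    (ha : ∀ n ≤ N, Differentiable ℝ (a n)) (hb : ∀ n ≤ N, Differentiable ℝ (b n))
    (hade : ∀ n ≤ N, ∀ t, deriv (a n) t = (n : ℝ) * ω t * b n t - K * a n t + p n t)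
    (hbde : ∀ n ≤ N, ∀ t, deriv (b n) t = -((n : ℝ) * ω t) * a n t - K * b n t + q n t)
    (m Q : ℝ → ℝ → ℝ)
    (hm : ∀ θ t, m θ t = ∑ n ∈ Finset.range (N + 1),
        (a n t * Real.sin ((n : ℝ) * θ) + b n t * Real.cos ((n : ℝ) * θ)))
    (hQ : ∀ θ t, Q θ t = ∑ n ∈ Finset.range (N + 1),
        (p n t * Real.sin ((n : ℝ) * θ) + q n t * Real.cos ((n : ℝ) * θ))) :
    ∀ θ t, deriv (fun s => m θ s) t =
      Q θ t - K * m θ t - ω t * deriv (fun φ => m φ t) θ := by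
  intro θ t
  have hmt : (fun s => m θ s) = fun s => ∑ n ∈ Finset.range (N + 1),
      (a n s * Real.sin ((n : ℝ) * θ) + b n s * Real.cos ((n : ℝ) * θ)) :=
    funext fun s => hm θ s
  have hmθ : (fun φ => m φ t) = fun φ => ∑ n ∈ Finset.range (N + 1),
      (a n t * Real.sin ((n : ℝ) * φ) + b n t * Real.cos ((n : ℝ) * φ)) :=
    funext fun φ => hm φ t
  have h1 : HasDerivAt (fun s => ∑ n ∈ Finset.range (N + 1),
      (a n s * Real.sin ((n : ℝ) * θ) + b n s * Real.cos ((n : ℝ) * θ)))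
      (∑ n ∈ Finset.range (N + 1),
        (deriv (a n) t * Real.sin ((n : ℝ) * θ) + deriv (b n) t * Real.cos ((n : ℝ) * θ))) t := by
    apply HasDerivAt.fun_sum
    intro n hn
    have hn' : n ≤ N := Nat.lt_succ_iff.mp (Finset.mem_range.mp hn)
    exact (((ha n hn' t).hasDerivAt.mul_const _).add
      (((hb n hn' t).hasDerivAt.mul_const _)))
  have h2 : HasDerivAt (fun φ => ∑ n ∈ Finset.range (N + 1),
      (a n t * Real.sin ((n : ℝ) * φ) + b n t * Real.cos ((n : ℝ) * φ)))
      (∑ n ∈ Finset.range (N + 1),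
        (a n t * ((n : ℝ) * Real.cos ((n : ℝ) * θ)) +
         b n t * (-((n : ℝ) * Real.sin ((n : ℝ) * θ))))) θ := by
    apply HasDerivAt.fun_sum
    intro n hn
    have hs : HasDerivAt (fun φ => Real.sin ((n : ℝ) * φ))
        (Real.cos ((n : ℝ) * θ) * (n : ℝ)) θ :=
      (Real.hasDerivAt_sin ((n : ℝ) * θ)).comp θ
        (by simpa using (hasDerivAt_id θ).const_mul (n : ℝ))
    have hc : HasDerivAt (fun φ => Real.cos ((n : ℝ) * φ))
        (-Real.sin ((n : ℝ) * θ) * (n : ℝ)) θ :=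
      (Real.hasDerivAt_cos ((n : ℝ) * θ)).comp θ
        (by simpa using (hasDerivAt_id θ).const_mul (n : ℝ))
    have := (hs.const_mul (a n t)).fun_add (hc.const_mul (b n t))
    convert this using 1
    ring
  rw [hmt, hmθ, hm, hQ, h1.deriv, h2.deriv, Finset.mul_sum, Finset.mul_sum,
    ← Finset.sum_sub_distrib, ← Finset.sum_sub_distrib]
  apply Finset.sum_congr rfl
  intro n hn
  have hn' : n ≤ N := Nat.lt_succ_iff.mp (Finset.mem_range.mp hn)
  rw [hade n hn' t, hbde n hn' t]
  ring
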